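/- arXiv:1312.0490 — 5 statements merged into one kernel-verified Lean document; each statement's English description precedes it below -/
import Mathlib

section
/- Let K be a field, let m ≥ 1 be an integer, and let c : ℤ/mℤ → Kˣ be a family of nonzero scalars. Define the K-linear endomorphism T of the space of functions v : ℤ/mℤ → K by (T v)(j) = c(j) · v(j − 1). Then the subspace of vectors fixed by T (i.e. {v | T v = v}) has dimension 1 over K if ∏_{j ∈ ℤ/mℤ} c(j) = 1, and dimension 0 otherwise. (This is the key linear-algebra step in the paper's proof of the defect formula: it computes the dimension of the fixed space of wσ on a sum of characters forming one Galois orbit.) -/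
open scoped Classical

section Aux

variable {K : Type*} [Field K] {m : ℕ} [NeZero m]

lemma prod_range_eq_prod_univ (g : ZMod m → K) :
    ∏ k ∈ Finset.range m, g (k : ZMod m) = ∏ j : ZMod m, g j := by
  apply Finset.prod_nbij' (fun k => ((k : ℕ) : ZMod m)) (fun a => a.val)
  · intro k _; exact Finset.mem_univ _
  · intro a _; exact Finset.mem_range.2 (ZMod.val_lt a)
  · intro k hk; exact ZMod.val_cast_of_lt (Finset.mem_range.1 hk)
  · intro a _; exact ZMod.natCast_rightInverse a
  · intro k _; rfl

end Aux

/-- Let `K` be a field, `m ≥ 1`, and `c : ZMod m → Kˣ`. Let `T` be the `K`-linear endomorphism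
of `K^{ℤ/mℤ}` given by `(T v)(j) = c j * v (j - 1)`. Then the space of vectors fixed by `T`
has dimension `1` if `∏ j, c j = 1`, and dimension `0` otherwise. -/
theorem finrank_fixedSpace_cyclic_twist
    (K : Type*) [Field K] (m : ℕ) [NeZero m] (c : ZMod m → Kˣ)
    (T : (ZMod m → K) →ₗ[K] (ZMod m → K))
    (hT : ∀ (v : ZMod m → K) (j : ZMod m), T v j = (c j : K) * v (j - 1)) :
    Module.finrank K (LinearMap.ker (T - LinearMap.id)) =
      if (∏ j : ZMod m, (c j : K)) = 1 then 1 else 0 := by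
  set P : K := ∏ j : ZMod m, (c j : K) with hP
  -- membership criterion
  have hmem : ∀ v : ZMod m → K, v ∈ LinearMap.ker (T - LinearMap.id) ↔
      ∀ j : ZMod m, v j = (c j : K) * v (j - 1) := by
    intro v
    rw [LinearMap.mem_ker, LinearMap.sub_apply, LinearMap.id_apply, sub_eq_zero]
    constructor
    · intro h j; rw [← hT v j, h]
    · intro h; funext j; rw [hT v j, ← h j]
  -- the recursion along naturals
  have hrec : ∀ v : ZMod m → K, (∀ j : ZMod m, v j = (c j : K) * v (j - 1)) →
      ∀ n : ℕ, v (n : ZMod m) = (∏ k ∈ Finset.range n, (c ((k + 1 : ℕ) : ZMod m) : K)) * v 0 := by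
    intro v hv n
    induction n with
    | zero => simp
    | succ n ih =>
        rw [Finset.prod_range_succ]
        have : ((n + 1 : ℕ) : ZMod m) - 1 = (n : ℕ) := by push_cast; ring
        rw [hv ((n + 1 : ℕ) : ZMod m), this, ih]
        ring
  have hm1 : m - 1 + 1 = m := Nat.succ_pred_eq_of_pos (Nat.pos_of_ne_zero (NeZero.ne m))
  -- product identity: c 0 * ∏_{k<m-1} c(k+1) = P
  have hprod : (c 0 : K) * ∏ k ∈ Finset.range (m - 1), (c ((k + 1 : ℕ) : ZMod m) : K) = P := by
    rw [hP, ← prod_range_eq_prod_univ (fun j => (c j : K))]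
    rw [show (Finset.range m) = Finset.range ((m-1)+1) from by rw [hm1],
      Finset.prod_range_succ' (fun k => (c ((k : ℕ) : ZMod m) : K))]
    push_cast
    ring
  -- full-cycle consistency
  have hcons : ∀ v : ZMod m → K, (∀ j : ZMod m, v j = (c j : K) * v (j - 1)) →
      v 0 = P * v 0 := by
    intro v hv
    have h0 := hv 0
    have hneg : (0 : ZMod m) - 1 = ((m - 1 : ℕ) : ZMod m) := by
      rw [Nat.cast_sub (by omega : 1 ≤ m)]
      simp [ZMod.natCast_self]
    rw [hneg, hrec v hv (m - 1), ← mul_assoc, hprod] at h0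
    exact h0
  by_cases hP1 : P = 1
  · rw [if_pos hP1]
    -- the explicit fixed vector
    set w : ZMod m → K := fun j => ∏ k ∈ Finset.range j.val, (c ((k + 1 : ℕ) : ZMod m) : K)
      with hw
    have hw0 : w 0 = 1 := by simp [hw]
    have hwker : w ∈ LinearMap.ker (T - LinearMap.id) := by
      rw [hmem]
      intro j
      by_cases hj : j = 0
      · subst hj
        have hneg : (0 : ZMod m) - 1 = ((m - 1 : ℕ) : ZMod m) := by
          rw [Nat.cast_sub (by omega : 1 ≤ m)]
          simp [ZMod.natCast_self]
        rw [hw0, hneg]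
        show (1 : K) = (c 0 : K) * ∏ k ∈ Finset.range (((m - 1 : ℕ) : ZMod m)).val,
          (c ((k + 1 : ℕ) : ZMod m) : K)
        rw [ZMod.val_cast_of_lt (by omega : m - 1 < m), hprod, hP1]
      · have hval : j.val = (j - 1).val + 1 := by
          have h1 : j.val ≠ 0 := fun h => hj (by rwa [← ZMod.val_eq_zero])
          have : j - 1 = ((j.val - 1 : ℕ) : ZMod m) := by
            rw [Nat.cast_sub (Nat.one_le_iff_ne_zero.2 h1), ZMod.natCast_rightInverse j,
              Nat.cast_one]
          rw [this, ZMod.val_cast_of_lt (by have := ZMod.val_lt j; omega)]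
          omega
        show (∏ k ∈ Finset.range j.val, (c ((k + 1 : ℕ) : ZMod m) : K)) = _
        rw [hval, Finset.prod_range_succ]
        have hcast : (((j - 1).val + 1 : ℕ) : ZMod m) = j := by
          push_cast
          rw [ZMod.natCast_val, ZMod.cast_id]
          ring
        rw [hcast]
        ring
    -- ker = span of w
    have hker : LinearMap.ker (T - LinearMap.id) = Submodule.span K {w} := by
      apply le_antisymm
      · intro v hv
        have hv' := (hmem v).1 hv
        have : v = v 0 • w := by
          funext j
          have := hrec v hv' j.val
          rw [ZMod.natCast_rightInverse j] at this
          simp only [Pi.smul_apply, smul_eq_mul, hw]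
          rw [this]; ring
        rw [this]
        exact Submodule.smul_mem _ _ (Submodule.mem_span_singleton_self w)
      · rw [Submodule.span_le, Set.singleton_subset_iff]
        exact hwker
    rw [hker]
    exact finrank_span_singleton (fun h => by simp [h] at hw0)
  · rw [if_neg hP1]
    have hker : LinearMap.ker (T - LinearMap.id) = ⊥ := by
      rw [Submodule.eq_bot_iff]
      intro v hv
      have hv' := (hmem v).1 hv
      have h0 : v 0 = 0 := by
        have := hcons v hv'
        have : (P - 1) * v 0 = 0 := by linear_combination -this
        rcases mul_eq_zero.1 this with h | h
        · exact absurd (sub_eq_zero.1 h) hP1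
        · exact h
      funext j
      have := hrec v hv' j.val
      rw [ZMod.natCast_rightInverse j] at this
      simp [this, h0]
    rw [hker]
    simp
end

section
/- Fix integers d, h ≥ 1 and a function m : ℤ/dℤ → ℤ, and set m_tot = ∑_{τ ∈ ℤ/dℤ} m(τ). Suppose gcd(m_tot, h) = 1. Let A ⊆ ℤ/dℤ × ℤ be an EL-chart for this data. Then for every τ ∈ ℤ/dℤ, the set B_{(τ)} = {(τ, a) ∈ A | (τ, a − h) ∉ A} has exactly h elements. -/
/-- The shift `x ↦ f(x)` on `ℤ^{(d)} = ℤ/dℤ × ℤ`, sending `(τ, a)` to `(τ+1, a + m(τ+1))`. -/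
def elShift {d : ℕ} (m : ZMod d → ℤ) (x : ZMod d × ℤ) : ZMod d × ℤ :=
  (x.1 + 1, x.2 + m (x.1 + 1))

/-- Translation by `h` in the `ℤ`-coordinate on `ℤ^{(d)} = ℤ/dℤ × ℤ`. -/
def elAddH {d : ℕ} (h : ℕ) (x : ZMod d × ℤ) : ZMod d × ℤ :=
  (x.1, x.2 + (h : ℤ))

/-- Fix `d, h ≥ 1` and `m : ℤ/dℤ → ℤ` with `gcd(∑ m(τ), h) = 1`. If `A` is an EL-chart
(nonempty, bounded below in the `ℤ`-coordinate, stable under `f` and under adding `h`),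
then for every `τ` the set `B_{(τ)}` of elements of `B = A \ (A + h)` with first
coordinate `τ` has exactly `h` elements. -/
theorem elChart_card_B_tau
    (d h : ℕ) [NeZero d] (hh : 1 ≤ h) (m : ZMod d → ℤ)
    (hcop : Int.gcd (∑ τ : ZMod d, m τ) (h : ℤ) = 1)
    (A : Set (ZMod d × ℤ))
    (hne : A.Nonempty)
    (hbdd : ∃ n : ℤ, ∀ x ∈ A, n ≤ x.2)
    (hf : ∀ x ∈ A, elShift m x ∈ A)
    (hstab : ∀ x ∈ A, elAddH h x ∈ A)
    (τ : ZMod d) :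
    {x : ZMod d × ℤ | x ∈ A \ (elAddH h '' A) ∧ x.1 = τ}.ncard = h := by
  classical
  set M : ℤ := ∑ τ : ZMod d, m τ with hM
  have hhpos : (0 : ℤ) < (h : ℤ) := by exact_mod_cast hh
  -- the sum lemma
  have hsum : ∀ σ : ZMod d, ∑ i ∈ Finset.range d, m (σ + (i : ZMod d) + 1) = M := by
    intro σ
    refine Finset.sum_nbij' (fun i => σ + (i : ZMod d) + 1) (fun τ => (τ - σ - 1).val)
      (fun a _ => Finset.mem_univ _) ?_ ?_ ?_ (fun a _ => rfl)
    · intro b _; simpa [Finset.mem_range] using ZMod.val_lt _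
    · intro a ha
      simp only [Finset.mem_range] at ha
      show (σ + (a : ZMod d) + 1 - σ - 1).val = a
      have : σ + (a : ZMod d) + 1 - σ - 1 = (a : ZMod d) := by ring
      rw [this, ZMod.val_natCast_of_lt ha]
    · intro b _
      show σ + ((b - σ - 1).val : ZMod d) + 1 = b
      have : ((b - σ - 1).val : ZMod d) = b - σ - 1 := by
        simp [ZMod.natCast_val, ZMod.cast_id]
      rw [this]; ring
  -- iterating elShift
  have hiter : ∀ (k : ℕ), ∀ x ∈ A,
      ((x.1 + (k : ZMod d), x.2 + ∑ i ∈ Finset.range k, m (x.1 + (i : ZMod d) + 1)) : ZMod d × ℤ) ∈ A := by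
    intro k
    induction k with
    | zero => intro x hx; simpa using hx
    | succ n ih =>
      intro x hx
      have h1 := hf _ (ih x hx)
      simp only [elShift] at h1
      rw [Finset.sum_range_succ]
      convert h1 using 2
      · push_cast; ring
      · ring
  -- the fiber over τ
  set S : Set ℤ := {a : ℤ | (τ, a) ∈ A} with hSdef
  have hS_ne : S.Nonempty := by
    obtain ⟨x, hx⟩ := hne
    refine ⟨x.2 + ∑ i ∈ Finset.range (τ - x.1).val, m (x.1 + (i : ZMod d) + 1), ?_⟩
    have := hiter (τ - x.1).val x hx
    have e : x.1 + (((τ - x.1).val : ℕ) : ZMod d) = τ := by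
      simp [ZMod.natCast_val, ZMod.cast_id]
    rwa [e] at this
  have hSh : ∀ a ∈ S, a + (h : ℤ) ∈ S := by
    intro a ha
    have := hstab (τ, a) ha
    simpa [elAddH, hSdef] using this
  have hSM : ∀ a ∈ S, a + M ∈ S := by
    intro a ha
    have := hiter d (τ, a) ha
    simpa [ZMod.natCast_self, hsum τ, hSdef] using this
  have hS_bdd : ∃ n : ℤ, ∀ a ∈ S, n ≤ a := by
    obtain ⟨n, hn⟩ := hbdd
    exact ⟨n, fun a ha => hn (τ, a) ha⟩
  -- iterated versions
  have hShk : ∀ (k : ℕ), ∀ a ∈ S, a + k * (h : ℤ) ∈ S := by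
    intro k
    induction k with
    | zero => intro a ha; simpa using ha
    | succ n ih =>
      intro a ha
      have := hSh _ (ih a ha)
      convert this using 1
      push_cast; ring
  have hSMk : ∀ (k : ℕ), ∀ a ∈ S, a + k * M ∈ S := by
    intro k
    induction k with
    | zero => intro a ha; simpa using ha
    | succ n ih =>
      intro a ha
      have := hSM _ (ih a ha)
      convert this using 1
      push_cast; ring
  -- the set T
  set T : Set ℤ := {a : ℤ | a ∈ S ∧ a - (h : ℤ) ∉ S} with hTdef
  -- reduce goal to T
  have himg : {x : ZMod d × ℤ | x ∈ A \ (elAddH h '' A) ∧ x.1 = τ} = (fun a => ((τ, a) : ZMod d × ℤ)) '' T := by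
    ext x
    simp only [Set.mem_setOf_eq, Set.mem_image, Set.mem_diff]
    constructor
    · rintro ⟨⟨hxA, hxI⟩, hx1⟩
      refine ⟨x.2, ⟨?_, ?_⟩, ?_⟩
      · rw [hSdef]; simp only [Set.mem_setOf_eq]; rw [← hx1]; exact hxA
      · intro hc
        apply hxI
        refine ⟨(τ, x.2 - (h : ℤ)), hc, ?_⟩
        simp [elAddH, ← hx1]
      · rw [← hx1]
    · rintro ⟨a, ⟨haS, hanS⟩, rfl⟩
      refine ⟨⟨haS, ?_⟩, rfl⟩
      rintro ⟨y, hy, hye⟩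
      apply hanS
      simp only [elAddH, Prod.mk.injEq] at hye
      obtain ⟨hy1, hy2⟩ := hye
      have : y.2 = a - (h : ℤ) := by omega
      rw [hSdef]; simp only [Set.mem_setOf_eq]
      rw [← hy1, ← this]
      exact hy
  rw [himg, Set.ncard_image_of_injective _ (by intro a b hab; simpa using hab)]
  -- now show T.ncard = h via bijection with ZMod h
  haveI : NeZero h := ⟨by omega⟩
  -- each residue class mod h meets S
  have hclass_ne : ∀ c : ZMod h, ∃ a ∈ S, (a : ZMod h) = c := by
    intro c
    obtain ⟨a0, ha0⟩ := hS_ne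
    have hco : IsCoprime M (h : ℤ) := Int.isCoprime_iff_gcd_eq_one.mpr hcop
    obtain ⟨u, v, huv⟩ := hco
    set b : ℤ := (c.val : ℤ) with hbdef
    set k0 : ℤ := u * (b - a0) with hk0def
    set k : ℕ := (k0 % (h : ℤ)).toNat with hkdef
    refine ⟨a0 + k * M, hSMk k a0 ha0, ?_⟩
    have hum : (u : ZMod h) * (M : ZMod h) = 1 := by
      have := congrArg (fun z : ℤ => (z : ZMod h)) huv
      push_cast at this
      simpa using this
    have hb : ((b : ℤ) : ZMod h) = c := by
      rw [hbdef]
      simp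
    have hk : ((k : ℤ) : ZMod h) = (k0 : ZMod h) := by
      have hkk : (k : ℤ) = k0 % (h : ℤ) :=
        Int.toNat_of_nonneg (Int.emod_nonneg _ (by omega))
      rw [hkk, ZMod.intCast_eq_intCast_iff]
      exact Int.emod_emod_of_dvd k0 dvd_rfl
    have hmul : (k0 : ZMod h) * (M : ZMod h) = (b : ZMod h) - (a0 : ZMod h) := by
      have hk0 : ((k0 : ℤ) : ZMod h) = (u : ZMod h) * ((b : ZMod h) - (a0 : ZMod h)) := by
        rw [hk0def]; push_cast; ring
      rw [hk0, mul_assoc, mul_comm ((b : ZMod h) - (a0 : ZMod h)), ← mul_assoc, hum, one_mul]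
    rw [Int.cast_add, Int.cast_mul, hk, hmul, hb]
    ring
  -- upward closure within a class
  have hup : ∀ a ∈ S, ∀ b : ℤ, a ≤ b → ((a : ZMod h) = (b : ZMod h)) → b ∈ S := by
    intro a ha b hab hcast
    have hdvd : (h : ℤ) ∣ b - a := by
      rw [← ZMod.intCast_zmod_eq_zero_iff_dvd]
      push_cast
      rw [hcast]; ring
    obtain ⟨k', hk'⟩ := hdvd
    have hk'nn : 0 ≤ k' := by nlinarith
    have hbe : b = a + (k'.toNat : ℤ) * (h : ℤ) := by
      rw [Int.toNat_of_nonneg hk'nn]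
      linarith [hk']
    rw [hbe]
    exact hShk k'.toNat a ha
  -- bijection T → ZMod h
  have hbij : Set.BijOn (fun a : ℤ => (a : ZMod h)) T Set.univ := by
    refine ⟨fun a _ => trivial, ?_, ?_⟩
    · intro a ha a' ha' hcast
      have hcast' : (a : ZMod h) = (a' : ZMod h) := hcast
      simp only [hTdef, Set.mem_setOf_eq] at ha ha'
      by_contra hne'
      rcases lt_or_gt_of_ne hne' with hlt | hlt
      · apply ha'.2
        apply hup a ha.1 (a' - h)
        · have hdvd : (h : ℤ) ∣ a' - a := by
            rw [← ZMod.intCast_zmod_eq_zero_iff_dvd]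
            push_cast
            rw [hcast']; ring
          obtain ⟨k', hk'⟩ := hdvd
          have : 1 ≤ k' := by nlinarith
          nlinarith
        · push_cast
          simp [hcast']
      · apply ha.2
        apply hup a' ha'.1 (a - h)
        · have hdvd : (h : ℤ) ∣ a - a' := by
            rw [← ZMod.intCast_zmod_eq_zero_iff_dvd]
            push_cast
            rw [hcast']; ring
          obtain ⟨k', hk'⟩ := hdvd
          have : 1 ≤ k' := by nlinarith
          nlinarith
        · push_cast
          simp [hcast']
    · intro c _
      obtain ⟨a0, ha0S, ha0c⟩ := hclass_ne c
      obtain ⟨nb, hnb⟩ := hS_bdd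
      obtain ⟨a, ⟨haS, hac⟩, hmin⟩ := Int.exists_least_of_bdd
        (P := fun z => z ∈ S ∧ (z : ZMod h) = c)
        ⟨nb, fun z hz => hnb z hz.1⟩ ⟨a0, ha0S, ha0c⟩
      refine ⟨a, ⟨haS, ?_⟩, hac⟩
      intro hc
      have : a ≤ a - (h : ℤ) := by
        apply hmin
        refine ⟨hc, ?_⟩
        push_cast
        simp [hac]
      omega
  have hcard := Set.ncard_image_of_injOn hbij.injOn
  rw [hbij.image_eq] at hcard
  rw [← hcard, Set.ncard_univ, Nat.card_zmod]
end

section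
/- Fix integers d, h ≥ 1 and a function m : ℤ/dℤ → ℤ. Let A ⊆ ℤ/dℤ × ℤ be a small EL-chart for this data and set B = A \ (A + h). Then for every b ∈ B exactly one of the following two alternatives holds: either f(b) ∈ B, or f(b) − h ∈ B. (This is the decomposition B = B⁺ ⊔ B⁻ used in the paper's analysis of superbasic Rapoport–Zink spaces of EL type.) -/
/-- Translation by `-h` in the `ℤ`-coordinate on `ℤ^{(d)} = ℤ/dℤ × ℤ`. -/
def elSubH {d : ℕ} (h : ℕ) (x : ZMod d × ℤ) : ZMod d × ℤ :=
  (x.1, x.2 - (h : ℤ))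

/-- Fix `d, h ≥ 1` and `m : ℤ/dℤ → ℤ`. Let `A` be a small EL-chart (nonempty, bounded
below in the `ℤ`-coordinate, stable under `f` and under adding `h`, with `A + h ⊆ f(A)`),
and let `B = A \ (A + h)`. Then for every `b ∈ B` exactly one of `f(b) ∈ B` and
`f(b) - h ∈ B` holds. -/
theorem smallELChart_B_decomposition
    (d h : ℕ) [NeZero d] (hh : 1 ≤ h) (m : ZMod d → ℤ)
    (A : Set (ZMod d × ℤ))
    (hne : A.Nonempty)
    (hbdd : ∃ n : ℤ, ∀ x ∈ A, n ≤ x.2)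
    (hf : ∀ x ∈ A, elShift m x ∈ A)
    (hstab : ∀ x ∈ A, elAddH h x ∈ A)
    (hsmall : elAddH h '' A ⊆ elShift m '' A)
    (b : ZMod d × ℤ) (hb : b ∈ A \ (elAddH h '' A)) :
    Xor' (elShift m b ∈ A \ (elAddH h '' A))
         (elSubH h (elShift m b) ∈ A \ (elAddH h '' A)) := by
  obtain ⟨hbA, hbB⟩ := hb
  have hinj : Function.Injective (elShift (d := d) m) := by
    intro x y hxy
    have h1 : x.1 = y.1 := by
      have := congrArg Prod.fst hxy
      simpa [elShift] using this
    have h2 : x.2 = y.2 := by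
      have := congrArg Prod.snd hxy
      simp only [elShift] at this
      rw [h1] at this
      exact add_right_cancel this
    exact Prod.ext h1 h2
  have hcomm : ∀ x : ZMod d × ℤ, elShift m (elAddH h x) = elAddH h (elShift m x) := by
    intro x
    simp [elShift, elAddH, Prod.ext_iff]
    ring
  by_cases hcase : elShift m b ∈ elAddH h '' A
  · -- f(b) ∈ A + h : second alternative
    obtain ⟨y, hyA, hy⟩ := hcase
    have hsub : elSubH h (elShift m b) = y := by
      rw [← hy]; simp [elSubH, elAddH]
    right
    constructor
    · rw [hsub]
      refine ⟨hyA, ?_⟩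
      rintro ⟨z, hzA, hz⟩
      -- y = z + h ∈ A + h ⊆ f(A)
      obtain ⟨w, hwA, hw⟩ := hsmall ⟨z, hzA, hz⟩
      -- f(w) = y, so f(b) = y + h = f(w) + h = f(w + h), hence b = w + h
      have : elShift m b = elShift m (elAddH h w) := by
        rw [hcomm, hw, hy]
      have hbw : b = elAddH h w := hinj this
      exact hbB ⟨w, hwA, hbw.symm⟩
    · rintro ⟨_, hnot⟩
      exact hnot ⟨y, hyA, hy⟩
  · -- f(b) ∉ A + h : first alternative
    left
    refine ⟨⟨hf b hbA, hcase⟩, ?_⟩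
    rintro ⟨hsubA, -⟩
    apply hcase
    refine ⟨elSubH h (elShift m b), hsubA, ?_⟩
    simp [elSubH, elAddH]
end

section
/- Fix integers d, h ≥ 1 and a function m : ℤ/dℤ → ℤ with total sum m_tot = ∑_τ m(τ), and suppose gcd(m_tot, h) = 1. Let s : ℕ → ℤ/dℤ × ℤ be any sequence such that for every i, either s(i+1) = f(s(i)) or s(i+1) = f(s(i)) − h. Then the elements s(0), s(1), …, s(d·h − 1) are pairwise distinct. (This is the paper's claim that the elements b₀, …, b_{dh−1} constructed from a small EL-chart are distinct, using that m and h are coprime.) -/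
lemma period_sum {d : ℕ} [NeZero d] (m : ZMod d → ℤ) (c : ZMod d) :
    ∑ l ∈ Finset.range d, m (c + l) = ∑ τ : ZMod d, m τ := by
  refine Finset.sum_nbij' (fun l => c + (l : ZMod d)) (fun τ => (τ - c).val) ?_ ?_ ?_ ?_ ?_
  · intro l _; exact Finset.mem_univ _
  · intro τ _; exact Finset.mem_range.mpr (ZMod.val_lt _)
  · intro l hl
    simp only [add_sub_cancel_left]
    exact ZMod.val_cast_of_lt (Finset.mem_range.mp hl)
  · intro τ _
    show c + (((τ - c).val : ℕ) : ZMod d) = τ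
    rw [ZMod.natCast_rightInverse (τ - c)]; ring
  · intro l _; rfl

lemma period_sum_mul {d : ℕ} [NeZero d] (m : ZMod d → ℤ) (c : ZMod d) (t : ℕ) :
    ∑ l ∈ Finset.range (d * t), m (c + l) = t * ∑ τ : ZMod d, m τ := by
  induction t with
  | zero => simp
  | succ t ih =>
    rw [Nat.mul_succ, Finset.sum_range_add, ih]
    have : ∑ l ∈ Finset.range d, m (c + ↑(d * t + l)) = ∑ τ : ZMod d, m τ := by
      rw [← period_sum m (c + (d * t : ℕ))]
      apply Finset.sum_congr rfl
      intro l _; push_cast; ring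
    rw [this]; push_cast; ring



/-- Fix `d, h ≥ 1` and `m : ℤ/dℤ → ℤ` with `gcd(∑ m(τ), h) = 1`. If `s : ℕ → ℤ/dℤ × ℤ`
is a sequence with `s (i+1) = f (s i)` or `s (i+1) = f (s i) - h` for all `i`, then the
elements `s 0, s 1, …, s (d·h - 1)` are pairwise distinct. -/
theorem elChart_sequence_injOn
    (d h : ℕ) [NeZero d] (hh : 1 ≤ h) (m : ZMod d → ℤ)
    (hcop : Int.gcd (∑ τ : ZMod d, m τ) (h : ℤ) = 1)
    (s : ℕ → ZMod d × ℤ)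
    (hs : ∀ i : ℕ, s (i + 1) = elShift m (s i) ∨ s (i + 1) = elSubH h (elShift m (s i))) :
    ∀ i j : ℕ, i < d * h → j < d * h → s i = s j → i = j := by
  have key : ∀ i n : ℕ, ∃ k : ℕ, k ≤ n ∧ (s (i + n)).1 = (s i).1 + n ∧
      (s (i + n)).2 = (s i).2 + (∑ l ∈ Finset.range n, m ((s i).1 + (l + 1))) - h * k := by
    intro i n
    induction n with
    | zero => exact ⟨0, le_refl _, by simp, by simp⟩
    | succ n ih =>
      obtain ⟨k, hk, h1, h2⟩ := ih
      rcases hs (i + n) with hcase | hcase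
      · refine ⟨k, hk.trans (Nat.le_succ n), ?_, ?_⟩
        · rw [show i + (n+1) = (i + n) + 1 from rfl, hcase]
          show (s (i+n)).1 + 1 = _
          rw [h1]; push_cast; ring
        · rw [show i + (n+1) = (i + n) + 1 from rfl, hcase]
          show (s (i+n)).2 + m ((s (i+n)).1 + 1) = _
          rw [h1, h2, Finset.sum_range_succ, add_assoc ((s i).1) (n : ZMod d) 1]
          push_cast
          ring
      · refine ⟨k + 1, by omega, ?_, ?_⟩
        · rw [show i + (n+1) = (i + n) + 1 from rfl, hcase]
          show (s (i+n)).1 + 1 = _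
          rw [h1]; push_cast; ring
        · rw [show i + (n+1) = (i + n) + 1 from rfl, hcase]
          show (s (i+n)).2 + m ((s (i+n)).1 + 1) - h = _
          rw [h1, h2, Finset.sum_range_succ, add_assoc ((s i).1) (n : ZMod d) 1]
          push_cast
          ring
  have main : ∀ i j : ℕ, i < j → j < d * h → s i = s j → False := by
    intro i j hij hjlt heq
    obtain ⟨n, rfl⟩ : ∃ n, j = i + n := ⟨j - i, by omega⟩
    obtain ⟨k, hk, h1, h2⟩ := key i n
    have hfst : (s i).1 = (s i).1 + (n : ZMod d) := by
      have := congrArg Prod.fst heq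
      rw [h1] at this; exact this
    have hn0 : (n : ZMod d) = 0 := by
      have := hfst.symm; rwa [add_eq_left] at this
    obtain ⟨t, rfl⟩ := (ZMod.natCast_eq_zero_iff n d).mp hn0
    have hd1 : 1 ≤ d := Nat.one_le_iff_ne_zero.mpr (NeZero.ne d)
    have ht1 : 1 ≤ t := Nat.pos_of_ne_zero (by rintro rfl; simp at hij)
    have hth : t < h := by
      have : d * t < d * h := by omega
      exact lt_of_mul_lt_mul_left this (Nat.zero_le d)
    -- second coordinate
    have hsum : ∑ l ∈ Finset.range (d * t), m ((s i).1 + (l + 1)) = t * ∑ τ : ZMod d, m τ := by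
      rw [← period_sum_mul m ((s i).1 + 1) t]
      apply Finset.sum_congr rfl
      intro l _; ring_nf
    have hsnd : (s i).2 = (s i).2 + t * (∑ τ : ZMod d, m τ) - h * k := by
      have := congrArg Prod.snd heq
      rw [h2, hsum] at this; exact this
    have heq2 : (t : ℤ) * (∑ τ : ZMod d, m τ) = h * k := by linarith
    -- h ∣ t
    have hdvd : (h : ℤ) ∣ t := by
      have hdvd' : (h : ℤ) ∣ (t : ℤ) * (∑ τ : ZMod d, m τ) := ⟨k, heq2⟩
      have hcop' : IsCoprime (h : ℤ) (∑ τ : ZMod d, m τ) := by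
        rw [Int.isCoprime_iff_gcd_eq_one, Int.gcd_comm]; exact hcop
      exact hcop'.dvd_of_dvd_mul_right hdvd'
    have : h ∣ t := by exact_mod_cast hdvd
    have := Nat.le_of_dvd ht1 this
    omega
  intro i j hi hj heq
  rcases lt_trichotomy i j with hlt | heqij | hgt
  · exact absurd heq fun heq => main i j hlt hj heq
  · exact heqij
  · exact absurd heq.symm fun heq => main j i hgt hi heq
end

section
/- Let h ≥ 1 be an integer and let S ⊆ ℤ be a subset that is bounded from below, satisfies S + h ⊆ S, and meets every residue class modulo h. Then the sets S \ (S + h), ℕ \ S and S ∩ {n ∈ ℤ | n < 0} are finite, and ∑_{b ∈ S \ (S+h)} b = h(h−1)/2 + h · ( #(ℕ \ S) − #(S ∩ {n ∈ ℤ | n < 0}) ). In particular, if #(ℕ \ S) = #(S ∩ {n < 0}) then ∑_{b ∈ S \ (S+h)} b = h(h−1)/2. (This is the computation by which the paper shows that the EL-chart A(M) attached to a special lattice is normalized.) -/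
/-- Let `h ≥ 1` and let `S ⊆ ℤ` be bounded from below with `S + h ⊆ S`, meeting every
residue class modulo `h`. Then `S \ (S + h)`, `ℕ \ S` and `S ∩ {n < 0}` are finite, and
`∑_{b ∈ S \ (S+h)} b = h(h-1)/2 + h · (#(ℕ \ S) - #(S ∩ {n < 0}))`. -/
theorem sum_diff_translate_eq
    (h : ℕ) (hh : 1 ≤ h) (S : Set ℤ)
    (hbdd : ∃ n : ℤ, ∀ s ∈ S, n ≤ s)
    (hstab : (fun s : ℤ => s + (h : ℤ)) '' S ⊆ S)
    (hfull : ∀ r : ℤ, ∃ s ∈ S, s ≡ r [ZMOD (h : ℤ)]) :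
    (S \ ((fun s : ℤ => s + (h : ℤ)) '' S)).Finite ∧
    ({n : ℤ | 0 ≤ n} \ S).Finite ∧
    (S ∩ {n : ℤ | n < 0}).Finite ∧
    ∑ᶠ b ∈ S \ ((fun s : ℤ => s + (h : ℤ)) '' S), b =
      (h : ℤ) * ((h : ℤ) - 1) / 2 +
        (h : ℤ) * ((({n : ℤ | 0 ≤ n} \ S).ncard : ℤ) - ((S ∩ {n : ℤ | n < 0}).ncard : ℤ)) := by
  have hZ : (0:ℤ) < (h:ℤ) := by exact_mod_cast hh
  -- least element in each residue class
  have hex : ∀ r : ℤ, ∃ b : ℤ, (b ∈ S ∧ b % (h:ℤ) = r % (h:ℤ)) ∧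
      ∀ z : ℤ, (z ∈ S ∧ z % (h:ℤ) = r % (h:ℤ)) → b ≤ z := by
    intro r
    obtain ⟨n, hn⟩ := hbdd
    obtain ⟨s, hs, hsr⟩ := hfull r
    exact Int.exists_least_of_bdd ⟨n, fun z hz => hn z hz.1⟩ ⟨s, hs, hsr⟩
  set B : ℤ → ℤ := fun r => Classical.choose (hex r) with hBdef
  have hB : ∀ r : ℤ, (B r ∈ S ∧ B r % (h:ℤ) = r % (h:ℤ)) ∧
      ∀ z : ℤ, (z ∈ S ∧ z % (h:ℤ) = r % (h:ℤ)) → B r ≤ z := fun r => Classical.choose_spec (hex r)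
  have hstab' : ∀ (k : ℕ) (x : ℤ), x ∈ S → x + (h:ℤ) * k ∈ S := by
    intro k
    induction k with
    | zero => simp
    | succ n ih =>
      intro x hx
      have := hstab ⟨x + (h:ℤ) * n, ih x hx, rfl⟩
      convert this using 1
      push_cast; ring
  have memS : ∀ s : ℤ, s ∈ S ↔ B (s % (h:ℤ)) ≤ s := by
    intro s
    constructor
    · intro hs
      exact (hB (s % h)).2 s ⟨hs, (Int.emod_emod_of_dvd s dvd_rfl).symm⟩
    · intro hle
      have hmod : (s - B (s % h)) % (h:ℤ) = 0 := by
        rw [Int.sub_emod, (hB (s % h)).1.2, Int.emod_emod_of_dvd s dvd_rfl, sub_self,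
          Int.zero_emod]
      obtain ⟨k, hk⟩ : (h:ℤ) ∣ s - B (s % h) := Int.dvd_of_emod_eq_zero hmod
      have hk0 : 0 ≤ k := by nlinarith
      have hs : s = B (s % h) + (h:ℤ) * k.toNat := by
        rw [Int.toNat_of_nonneg hk0]; linarith
      rw [hs]
      exact hstab' _ _ (hB _).1.1
  -- the difference set
  have himg : ∀ s : ℤ, s ∈ (fun s : ℤ => s + (h:ℤ)) '' S ↔ s - (h:ℤ) ∈ S := by
    intro s
    constructor
    · rintro ⟨x, hx, rfl⟩; simpa using hx
    · intro hx; exact ⟨s - h, hx, by ring⟩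
  have hdiff : S \ ((fun s : ℤ => s + (h : ℤ)) '' S) = ↑((Finset.Ico (0:ℤ) (h:ℤ)).image B) := by
    ext s
    simp only [Set.mem_diff, himg, memS, Finset.coe_image, Set.mem_image, Finset.mem_coe,
      Finset.mem_Ico]
    constructor
    · rintro ⟨h1, h2⟩
      rw [Int.sub_emod_right] at h2
      have hseq : s = B (s % h) := by
        have h3 : s - B (s % h) < h := by omega
        have hmod : (s - B (s % h)) % (h:ℤ) = 0 := by
          rw [Int.sub_emod, (hB (s % h)).1.2, Int.emod_emod_of_dvd s dvd_rfl, sub_self,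
            Int.zero_emod]
        obtain ⟨k, hk⟩ := Int.dvd_of_emod_eq_zero hmod
        have hk1 : k < 1 := by nlinarith
        have hk0 : 0 ≤ k := by nlinarith
        have hk2 : k = 0 := by omega
        rw [hk2, mul_zero] at hk
        omega
      exact ⟨s % h, ⟨Int.emod_nonneg s (by omega), Int.emod_lt_of_pos s hZ⟩, hseq.symm⟩
    · rintro ⟨r, ⟨hr0, hrh⟩, rfl⟩
      have hBr : B r % (h:ℤ) = r := by rw [(hB r).1.2, Int.emod_eq_of_lt hr0 hrh]
      refine ⟨by rw [hBr], ?_⟩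
      rw [Int.sub_emod_right, hBr]
      intro hle
      have : B r ≤ B r - h := hle
      omega
  classical
  have hfin1 : (S \ ((fun s : ℤ => s + (h : ℤ)) '' S)).Finite := by
    rw [hdiff]; exact Finset.finite_toSet _
  -- the "offset" of each residue class
  set K : ℤ → ℤ := fun r => (B r - r) / (h:ℤ) with hKdef
  have hBK : ∀ r : ℤ, 0 ≤ r → r < (h:ℤ) → B r = r + (h:ℤ) * K r := by
    intro r hr0 hrh
    have hBr : B r % (h:ℤ) = r := by rw [(hB r).1.2, Int.emod_eq_of_lt hr0 hrh]
    have hdvd : (h:ℤ) ∣ B r - r := by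
      apply Int.dvd_of_emod_eq_zero
      rw [Int.sub_emod, hBr, Int.emod_eq_of_lt hr0 hrh, sub_self, Int.zero_emod]
    have h2 : K r * (h:ℤ) = B r - r := Int.ediv_mul_cancel hdvd
    have h3 : (h:ℤ) * K r = B r - r := by rw [mul_comm]; exact h2
    linarith
  have hresid : ∀ r j : ℤ, 0 ≤ r → r < (h:ℤ) → (r + (h:ℤ) * j) % (h:ℤ) = r := by
    intro r j hr0 hrh
    rw [Int.add_mul_emod_self_left, Int.emod_eq_of_lt hr0 hrh]
  have hAffInj : ∀ r : ℤ, Function.Injective (fun j : ℤ => r + (h:ℤ) * j) := by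
    intro r a b hab
    simp only at hab
    have : (h:ℤ) * a = (h:ℤ) * b := by linarith
    exact mul_left_cancel₀ (by positivity) this
  -- the finsets representing the two complements
  set TA : Finset ℤ := (Finset.Ico (0:ℤ) (h:ℤ)).biUnion
      (fun r => (Finset.Ico (0:ℤ) (K r)).image (fun j => r + (h:ℤ) * j)) with hTAdef
  set TC : Finset ℤ := (Finset.Ico (0:ℤ) (h:ℤ)).biUnion
      (fun r => (Finset.Ico (K r) 0).image (fun j => r + (h:ℤ) * j)) with hTCdef
  have hNA : {n : ℤ | 0 ≤ n} \ S = ↑TA := by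
    ext n
    simp only [Set.mem_diff, Set.mem_setOf_eq, memS, hTAdef, Finset.coe_biUnion,
      Set.mem_iUnion, Finset.mem_coe, Finset.mem_image, Finset.mem_Ico]
    constructor
    · rintro ⟨hn0, hns⟩
      push_neg at hns
      have hr0 : 0 ≤ n % (h:ℤ) := Int.emod_nonneg n (by positivity)
      have hrh : n % (h:ℤ) < (h:ℤ) := Int.emod_lt_of_pos n hZ
      have hb := hBK (n % h) hr0 hrh
      have hne : n % (h:ℤ) + (h:ℤ) * (n / h) = n := Int.emod_add_mul_ediv n h
      have hlt : (h:ℤ) * (n / h) < (h:ℤ) * K (n % h) := by linarith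
      refine ⟨n % h, ⟨hr0, hrh⟩, n / h,
        ⟨Int.ediv_nonneg hn0 (le_of_lt hZ), lt_of_mul_lt_mul_left hlt (le_of_lt hZ)⟩, hne⟩
    · rintro ⟨r, ⟨hr0, hrh⟩, j, ⟨hj0, hjk⟩, rfl⟩
      refine ⟨by positivity, ?_⟩
      rw [hresid r j hr0 hrh, hBK r hr0 hrh]
      intro hle
      have : (h:ℤ) * K r ≤ (h:ℤ) * j := by linarith
      have := le_of_mul_le_mul_left this hZ
      omega
  have hNC : S ∩ {n : ℤ | n < 0} = ↑TC := by
    ext n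
    simp only [Set.mem_inter_iff, Set.mem_setOf_eq, memS, hTCdef, Finset.coe_biUnion,
      Set.mem_iUnion, Finset.mem_coe, Finset.mem_image, Finset.mem_Ico]
    constructor
    · rintro ⟨hns, hn0⟩
      have hr0 : 0 ≤ n % (h:ℤ) := Int.emod_nonneg n (by positivity)
      have hrh : n % (h:ℤ) < (h:ℤ) := Int.emod_lt_of_pos n hZ
      have hb := hBK (n % h) hr0 hrh
      have hne : n % (h:ℤ) + (h:ℤ) * (n / h) = n := Int.emod_add_mul_ediv n h
      have hle : (h:ℤ) * K (n % h) ≤ (h:ℤ) * (n / h) := by linarith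
      have hjneg : n / h < 0 := by
        by_contra hcon
        push_neg at hcon
        have : (0:ℤ) ≤ (h:ℤ) * (n / h) := mul_nonneg (le_of_lt hZ) hcon
        omega
      exact ⟨n % h, ⟨hr0, hrh⟩, n / h, ⟨le_of_mul_le_mul_left hle hZ, hjneg⟩, hne⟩
    · rintro ⟨r, ⟨hr0, hrh⟩, j, ⟨hjk, hj0⟩, rfl⟩
      constructor
      · rw [hresid r j hr0 hrh, hBK r hr0 hrh]
        have : (h:ℤ) * K r ≤ (h:ℤ) * j :=
          mul_le_mul_of_nonneg_left hjk (le_of_lt hZ)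
        linarith
      · have : (h:ℤ) * j ≤ (h:ℤ) * (-1) :=
          mul_le_mul_of_nonneg_left (by omega) (le_of_lt hZ)
        omega
  have hfin2 : ({n : ℤ | 0 ≤ n} \ S).Finite := by rw [hNA]; exact Finset.finite_toSet _
  have hfin3 : (S ∩ {n : ℤ | n < 0}).Finite := by rw [hNC]; exact Finset.finite_toSet _
  refine ⟨hfin1, hfin2, hfin3, ?_⟩
  -- disjointness of residue pieces
  have hdisj : ∀ (I : ℤ → Finset ℤ), ∀ r ∈ Finset.Ico (0:ℤ) (h:ℤ), ∀ r' ∈ Finset.Ico (0:ℤ) (h:ℤ),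
      r ≠ r' → Disjoint ((I r).image (fun j => r + (h:ℤ) * j))
        ((I r').image (fun j => r' + (h:ℤ) * j)) := by
    intro I r hr r' hr' hne
    simp only [Finset.mem_Ico] at hr hr'
    rw [Finset.disjoint_left]
    simp only [Finset.mem_image]
    rintro a ⟨j, _, rfl⟩ ⟨j', _, he⟩
    apply hne
    have h1 := hresid r j hr.1 hr.2
    have h2 := hresid r' j' hr'.1 hr'.2
    rw [he] at h2
    rw [← h1, ← h2]
  have hcardA : TA.card = ∑ r ∈ Finset.Ico (0:ℤ) (h:ℤ), (K r).toNat := by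
    rw [hTAdef, Finset.card_biUnion (hdisj _)]
    refine Finset.sum_congr rfl fun r _ => ?_
    rw [Finset.card_image_of_injective _ (hAffInj r), Int.card_Ico, sub_zero]
  have hcardC : TC.card = ∑ r ∈ Finset.Ico (0:ℤ) (h:ℤ), (-(K r)).toNat := by
    rw [hTCdef, Finset.card_biUnion (hdisj _)]
    refine Finset.sum_congr rfl fun r _ => ?_
    rw [Finset.card_image_of_injective _ (hAffInj r), Int.card_Ico, zero_sub]
  -- the finsum
  have hsum : ∑ᶠ b ∈ S \ ((fun s : ℤ => s + (h : ℤ)) '' S), b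
      = ∑ r ∈ Finset.Ico (0:ℤ) (h:ℤ), B r := by
    rw [hdiff, finsum_mem_coe_finset]
    refine Finset.sum_image fun r hr r' hr' he => ?_
    simp only [Finset.mem_coe, Finset.mem_Ico] at hr hr'
    have h1 : B r % (h:ℤ) = r := by rw [(hB r).1.2, Int.emod_eq_of_lt hr.1 hr.2]
    have h2 : B r' % (h:ℤ) = r' := by rw [(hB r').1.2, Int.emod_eq_of_lt hr'.1 hr'.2]
    rw [← h1, ← h2, he]
  -- Gauss sum
  have hg2 : ∀ m : ℕ, 2 * ∑ r ∈ Finset.Ico (0:ℤ) (m:ℤ), r = (m:ℤ) * ((m:ℤ) - 1) := by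
    intro m
    induction m with
    | zero => simp
    | succ n ih =>
      have hins : Finset.Ico (0:ℤ) ((n:ℤ)+1) = insert (n:ℤ) (Finset.Ico (0:ℤ) (n:ℤ)) := by
        ext x
        simp only [Finset.mem_Ico, Finset.mem_insert]
        omega
      push_cast
      rw [hins, Finset.sum_insert (by simp)]
      push_cast at ih
      ring_nf
      ring_nf at ih
      linarith
  have hgauss : ∑ r ∈ Finset.Ico (0:ℤ) ((h:ℕ):ℤ), r = (h:ℤ) * ((h:ℤ) - 1) / 2 := by
    have := hg2 h
    omega
  rw [hsum, hNA, hNC, Set.ncard_coe_finset, Set.ncard_coe_finset, hcardA, hcardC]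
  have hBsum : ∑ r ∈ Finset.Ico (0:ℤ) (h:ℤ), B r
      = (∑ r ∈ Finset.Ico (0:ℤ) (h:ℤ), r) + (h:ℤ) * ∑ r ∈ Finset.Ico (0:ℤ) (h:ℤ), K r := by
    rw [Finset.mul_sum, ← Finset.sum_add_distrib]
    refine Finset.sum_congr rfl fun r hr => ?_
    simp only [Finset.mem_Ico] at hr
    exact hBK r hr.1 hr.2
  have hKsum : ((∑ r ∈ Finset.Ico (0:ℤ) (h:ℤ), (K r).toNat : ℕ) : ℤ)
      - ((∑ r ∈ Finset.Ico (0:ℤ) (h:ℤ), (-(K r)).toNat : ℕ) : ℤ)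
      = ∑ r ∈ Finset.Ico (0:ℤ) (h:ℤ), K r := by
    push_cast
    rw [← Finset.sum_sub_distrib]
    refine Finset.sum_congr rfl fun r _ => ?_
    omega
  rw [hBsum, hKsum, hgauss]
end
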